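/- The first Abdelqader–Lake syzygy holds for the Kerr–(anti-)de Sitter black hole: for all real a, m, Λ and all (r, θ) with r² + a²cos²θ > 0, one has I₆ − I₅ + (12/5)(I₁I₃ − I₂I₄) = 0. -/

import Mathlib

noncomputable section

namespace KerrAdS

/-- `ρ² = r² + a² cos²θ` in Boyer–Lindquist coordinates. -/
def rho2 (a r θ : ℝ) : ℝ := r ^ 2 + a ^ 2 * Real.cos θ ^ 2

/-- The complex combination `I₁ + i I₂ = 48 m² (r − i a cos θ)⁶ / ρ¹²`
(the orientation convention `I₁ + iI₂ = 48 Ψ₂²` with `Ψ₂ = −m/(r + i a cos θ)³`). -/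
def Ic (a m r θ : ℝ) : ℂ :=
  48 * (m : ℂ) ^ 2 * ((r : ℂ) - Complex.I * ((a * Real.cos θ : ℝ) : ℂ)) ^ 6 /
    ((rho2 a r θ : ℝ) : ℂ) ^ 6

/-- The Weyl invariant `I₁ = C_{αβγδ} C^{αβγδ}` of the Kerr–(anti-)de Sitter black hole. -/
def I1 (a m r θ : ℝ) : ℝ := (Ic a m r θ).re

/-- The Chern–Pontryagin invariant `I₂ = C*_{αβγδ} C^{αβγδ}`. -/
def I2 (a m r θ : ℝ) : ℝ := (Ic a m r θ).im

/-- `Δ_r = (1 − Λr²/3)(r² + a²) − 2mr`. -/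
def Δr (a m Λ r : ℝ) : ℝ := (1 - Λ * r ^ 2 / 3) * (r ^ 2 + a ^ 2) - 2 * m * r

/-- `Δ_θ = 1 + (a²Λ/3) cos²θ`. -/
def Δθ (a Λ θ : ℝ) : ℝ := 1 + a ^ 2 * Λ / 3 * Real.cos θ ^ 2

/-- The gradient invariant `I₅ = ∇_μ I₁ ∇^μ I₁
  = (Δ_r/ρ²)(∂_r I₁)² + (Δ_θ/ρ²)(∂_θ I₁)²`. -/
def I5 (a m Λ r θ : ℝ) : ℝ :=
  Δr a m Λ r / rho2 a r θ * (deriv (fun r' => I1 a m r' θ) r) ^ 2 +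
    Δθ a Λ θ / rho2 a r θ * (deriv (fun θ' => I1 a m r θ') θ) ^ 2

/-- The gradient invariant `I₆ = ∇_μ I₂ ∇^μ I₂
  = (Δ_r/ρ²)(∂_r I₂)² + (Δ_θ/ρ²)(∂_θ I₂)²`. -/
def I6 (a m Λ r θ : ℝ) : ℝ :=
  Δr a m Λ r / rho2 a r θ * (deriv (fun r' => I2 a m r' θ) r) ^ 2 +
    Δθ a Λ θ / rho2 a r θ * (deriv (fun θ' => I2 a m r θ') θ) ^ 2

/-- The gradient invariant `I₇ = ∇_μ I₁ ∇^μ I₂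
  = (Δ_r/ρ²)(∂_r I₁)(∂_r I₂) + (Δ_θ/ρ²)(∂_θ I₁)(∂_θ I₂)`. -/
def I7 (a m Λ r θ : ℝ) : ℝ :=
  Δr a m Λ r / rho2 a r θ *
      (deriv (fun r' => I1 a m r' θ) r) * (deriv (fun r' => I2 a m r' θ) r) +
    Δθ a Λ θ / rho2 a r θ *
      (deriv (fun θ' => I1 a m r θ') θ) * (deriv (fun θ' => I2 a m r θ') θ)

/-- The ergosurface polynomial
`E = Λa⁴c⁴ − Λa⁴c² − Λa²r² − Λr⁴ + 3a²c² − 6mr + 3r²`, `c = cos θ`. -/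
def E (a m Λ r θ : ℝ) : ℝ :=
  Λ * a ^ 4 * Real.cos θ ^ 4 - Λ * a ^ 4 * Real.cos θ ^ 2 - Λ * a ^ 2 * r ^ 2 - Λ * r ^ 4 +
    3 * a ^ 2 * Real.cos θ ^ 2 - 6 * m * r + 3 * r ^ 2

/-- The differential Weyl invariant `I₃ = ∇_μ C_{αβγδ} ∇^μ C^{αβγδ}`
(explicit closed form). -/
def I3 (a m Λ r θ : ℝ) : ℝ :=
  240 * m ^ 2 / rho2 a r θ ^ 9 *
    (a ^ 4 * Real.cos θ ^ 4 - 4 * a ^ 3 * Real.cos θ ^ 3 * r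
      - 6 * a ^ 2 * Real.cos θ ^ 2 * r ^ 2 + 4 * a * Real.cos θ * r ^ 3 + r ^ 4) *
    (a ^ 4 * Real.cos θ ^ 4 + 4 * a ^ 3 * Real.cos θ ^ 3 * r
      - 6 * a ^ 2 * Real.cos θ ^ 2 * r ^ 2 - 4 * a * Real.cos θ * r ^ 3 + r ^ 4) *
    E a m Λ r θ

/-- The mixed differential Weyl invariant `I₄ = ∇_μ C_{αβγδ} ∇^μ C*^{αβγδ}`
(explicit closed form). -/
def I4 (a m Λ r θ : ℝ) : ℝ :=
  1920 * a * Real.cos θ * r * m ^ 2 / rho2 a r θ ^ 9 * E a m Λ r θ *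
    (a ^ 2 * Real.cos θ ^ 2 - 2 * a * Real.cos θ * r - r ^ 2) *
    (a ^ 2 * Real.cos θ ^ 2 + 2 * a * Real.cos θ * r - r ^ 2) *
    (a ^ 2 * Real.cos θ ^ 2 - r ^ 2)

end KerrAdS

namespace KerrAdS

lemma Ic_aux (m r u : ℝ) :
    48 * (m : ℂ) ^ 2 * ((r : ℂ) - Complex.I * ((u : ℝ) : ℂ)) ^ 6 / ((r^2 + u^2 : ℝ) : ℂ) ^ 6
      = ((48*m^2*(r^6 - 15*r^4*u^2 + 15*r^2*u^4 - u^6) / (r^2 + u^2)^6 : ℝ) : ℂ)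
        + ((48*m^2*(-6*r^5*u + 20*r^3*u^3 - 6*r*u^5) / (r^2 + u^2)^6 : ℝ) : ℂ) * Complex.I := by
  have h2 : (Complex.I)^2 = -1 := Complex.I_sq
  have key : ((r:ℂ) - Complex.I * ((u:ℝ) : ℂ))^6
      = ((r^6 - 15*r^4*u^2 + 15*r^2*u^4 - u^6 : ℝ) : ℂ)
        + ((-6*r^5*u + 20*r^3*u^3 - 6*r*u^5 : ℝ) : ℂ) * Complex.I := by
    push_cast
    linear_combination (15*(r:ℂ)^4*(u:ℂ)^2 - 20*(r:ℂ)^3*(u:ℂ)^3*Complex.I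
      + 15*(r:ℂ)^2*(u:ℂ)^4*(Complex.I^2-1) - 6*(r:ℂ)*(u:ℂ)^5*(Complex.I^3-Complex.I)
      + (u:ℂ)^6*(Complex.I^4-Complex.I^2+1)) * h2
  rw [key]
  by_cases hd : (r^2 + u^2 : ℝ) = 0
  · simp [hd]
  · have hd' : ((r^2 + u^2 : ℝ) : ℂ) ≠ 0 := by exact_mod_cast hd
    push_cast
    field_simp

lemma Ic_eq (a m r θ : ℝ) :
    Ic a m r θ =
      ((48*m^2*(r^6 - 15*r^4*(a*Real.cos θ)^2 + 15*r^2*(a*Real.cos θ)^4 - (a*Real.cos θ)^6)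
          / (r^2 + (a*Real.cos θ)^2)^6 : ℝ) : ℂ)
      + ((48*m^2*(-6*r^5*(a*Real.cos θ) + 20*r^3*(a*Real.cos θ)^3 - 6*r*(a*Real.cos θ)^5)
          / (r^2 + (a*Real.cos θ)^2)^6 : ℝ) : ℂ) * Complex.I := by
  rw [Ic, show rho2 a r θ = r^2 + (a*Real.cos θ)^2 from by rw [rho2]; ring]
  exact Ic_aux m r (a*Real.cos θ)

lemma I1_eq (a m r θ : ℝ) :
    I1 a m r θ = 48*m^2*(r^6 - 15*r^4*(a*Real.cos θ)^2 + 15*r^2*(a*Real.cos θ)^4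
        - (a*Real.cos θ)^6) / (r^2 + (a*Real.cos θ)^2)^6 := by
  rw [I1, Ic_eq]
  simp only [Complex.add_re, Complex.ofReal_re, Complex.mul_re, Complex.I_re, Complex.I_im,
    Complex.ofReal_im]
  ring

lemma I2_eq (a m r θ : ℝ) :
    I2 a m r θ = 48*m^2*(-6*r^5*(a*Real.cos θ) + 20*r^3*(a*Real.cos θ)^3
        - 6*r*(a*Real.cos θ)^5) / (r^2 + (a*Real.cos θ)^2)^6 := by
  rw [I2, Ic_eq]
  simp only [Complex.add_im, Complex.ofReal_im, Complex.mul_im, Complex.I_re, Complex.I_im,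
    Complex.ofReal_re]
  ring

lemma hden_r (u r : ℝ) :
    HasDerivAt (fun r' : ℝ => (r'^2 + u^2)^6) (12*r*(r^2+u^2)^5) r := by
  have h := ((hasDerivAt_pow 2 r).add_const (u^2)).pow 6
  refine h.congr_deriv ?_
  push_cast; ring

lemma deriv_I1_r (a m θ r : ℝ) (h : r^2 + (a*Real.cos θ)^2 ≠ 0) :
    deriv (fun r' => I1 a m r' θ) r
      = 48*m^2*((6*r^5 - 60*r^3*(a*Real.cos θ)^2 + 30*r*(a*Real.cos θ)^4)*(r^2+(a*Real.cos θ)^2)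
          - 12*r*(r^6 - 15*r^4*(a*Real.cos θ)^2 + 15*r^2*(a*Real.cos θ)^4 - (a*Real.cos θ)^6))
        / (r^2 + (a*Real.cos θ)^2)^7 := by
  set u := a * Real.cos θ with hu
  have hf : (fun r' => I1 a m r' θ)
      = fun r' => 48*m^2*(r'^6 - 15*r'^4*u^2 + 15*r'^2*u^4 - u^6) / (r'^2 + u^2)^6 :=
    funext fun r' => I1_eq a m r' θ
  have hnum : HasDerivAt (fun r' : ℝ => 48*m^2*(r'^6 - 15*r'^4*u^2 + 15*r'^2*u^4 - u^6))
      (48*m^2*(6*r^5 - 60*r^3*u^2 + 30*r*u^4)) r := by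
    have h := ((((hasDerivAt_pow 6 r).sub (((hasDerivAt_pow 4 r).const_mul (15:ℝ)).mul_const
      (u^2))).add (((hasDerivAt_pow 2 r).const_mul (15:ℝ)).mul_const (u^4))).sub_const
      (u^6)).const_mul (48*m^2)
    refine h.congr_deriv ?_
    push_cast; ring
  have hd := hnum.div (hden_r u r) (pow_ne_zero 6 h)
  rw [hf]; erw [hd.deriv]
  field_simp

lemma deriv_I2_r (a m θ r : ℝ) (h : r^2 + (a*Real.cos θ)^2 ≠ 0) :
    deriv (fun r' => I2 a m r' θ) r
      = 48*m^2*((-30*r^4*(a*Real.cos θ) + 60*r^2*(a*Real.cos θ)^3 - 6*(a*Real.cos θ)^5)*(r^2+(a*Real.cos θ)^2)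
          - 12*r*(-6*r^5*(a*Real.cos θ) + 20*r^3*(a*Real.cos θ)^3 - 6*r*(a*Real.cos θ)^5))
        / (r^2 + (a*Real.cos θ)^2)^7 := by
  set u := a * Real.cos θ with hu
  have hf : (fun r' => I2 a m r' θ)
      = fun r' => 48*m^2*(-6*r'^5*u + 20*r'^3*u^3 - 6*r'*u^5) / (r'^2 + u^2)^6 :=
    funext fun r' => I2_eq a m r' θ
  have hnum : HasDerivAt (fun r' : ℝ => 48*m^2*(-6*r'^5*u + 20*r'^3*u^3 - 6*r'*u^5))
      (48*m^2*(-30*r^4*u + 60*r^2*u^3 - 6*u^5)) r := by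
    have h := (((((hasDerivAt_pow 5 r).const_mul (6:ℝ)).mul_const u).neg.add
      (((hasDerivAt_pow 3 r).const_mul (20:ℝ)).mul_const (u^3))).sub
      (((hasDerivAt_id r).const_mul (6:ℝ)).mul_const (u^5))).const_mul (48*m^2)
    refine (h.congr_deriv ?_).congr_of_eventuallyEq (Filter.Eventually.of_forall fun x => ?_)
    all_goals try funext x
    all_goals try simp only [id_eq, Pi.add_apply, Pi.neg_apply, Pi.sub_apply]
    all_goals push_cast
    all_goals ring
  have hd := hnum.div (hden_r u r) (pow_ne_zero 6 h)
  rw [hf]; erw [hd.deriv]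
  field_simp

lemma deriv_I1_θ (a m r θ : ℝ) (h : r^2 + (a*Real.cos θ)^2 ≠ 0) :
    deriv (fun θ' => I1 a m r θ') θ
      = -(a*Real.sin θ) *
        (48*m^2*((-30*r^4*(a*Real.cos θ) + 60*r^2*(a*Real.cos θ)^3 - 6*(a*Real.cos θ)^5)*(r^2+(a*Real.cos θ)^2)
          - 12*(a*Real.cos θ)*(r^6 - 15*r^4*(a*Real.cos θ)^2 + 15*r^2*(a*Real.cos θ)^4 - (a*Real.cos θ)^6))
        / (r^2 + (a*Real.cos θ)^2)^7) := by
  have hf : (fun θ' => I1 a m r θ')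
      = (fun u' : ℝ => 48*m^2*(r^6 - 15*r^4*u'^2 + 15*r^2*u'^4 - u'^6) / (r^2 + u'^2)^6)
          ∘ (fun θ' => a * Real.cos θ') :=
    funext fun θ' => I1_eq a m r θ'
  set u := a * Real.cos θ with hu
  have hnum : HasDerivAt (fun u' : ℝ => 48*m^2*(r^6 - 15*r^4*u'^2 + 15*r^2*u'^4 - u'^6))
      (48*m^2*(-30*r^4*u + 60*r^2*u^3 - 6*u^5)) u := by
    have h := ((((((hasDerivAt_pow 2 u).const_mul (15*r^4)).const_sub (r^6))).add
      ((hasDerivAt_pow 4 u).const_mul (15*r^2))).sub (hasDerivAt_pow 6 u)).const_mul (48*m^2)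
    refine h.congr_deriv ?_
    all_goals try funext x
    all_goals try simp only [id_eq]
    all_goals push_cast
    all_goals ring
  have hdenu : HasDerivAt (fun u' : ℝ => (r^2 + u'^2)^6) (12*u*(r^2+u^2)^5) u := by
    have h := ((hasDerivAt_pow 2 u).const_add (r^2)).pow 6
    refine h.congr_deriv ?_
    push_cast; ring
  have hg := hnum.div hdenu (pow_ne_zero 6 h)
  have hcos : HasDerivAt (fun θ' => a * Real.cos θ') (a * -Real.sin θ) θ :=
    (Real.hasDerivAt_cos θ).const_mul a
  have hcomp := hg.comp θ hcos
  rw [hf]; erw [hcomp.deriv]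
  field_simp

lemma deriv_I2_θ (a m r θ : ℝ) (h : r^2 + (a*Real.cos θ)^2 ≠ 0) :
    deriv (fun θ' => I2 a m r θ') θ
      = -(a*Real.sin θ) *
        (48*m^2*((-6*r^5 + 60*r^3*(a*Real.cos θ)^2 - 30*r*(a*Real.cos θ)^4)*(r^2+(a*Real.cos θ)^2)
          - 12*(a*Real.cos θ)*(-6*r^5*(a*Real.cos θ) + 20*r^3*(a*Real.cos θ)^3 - 6*r*(a*Real.cos θ)^5))
        / (r^2 + (a*Real.cos θ)^2)^7) := by
  have hf : (fun θ' => I2 a m r θ')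
      = (fun u' : ℝ => 48*m^2*(-6*r^5*u' + 20*r^3*u'^3 - 6*r*u'^5) / (r^2 + u'^2)^6)
          ∘ (fun θ' => a * Real.cos θ') :=
    funext fun θ' => I2_eq a m r θ'
  set u := a * Real.cos θ with hu
  have hnum : HasDerivAt (fun u' : ℝ => 48*m^2*(-6*r^5*u' + 20*r^3*u'^3 - 6*r*u'^5))
      (48*m^2*(-6*r^5 + 60*r^3*u^2 - 30*r*u^4)) u := by
    have h := ((((hasDerivAt_id u).const_mul (6*r^5)).neg.add
      ((hasDerivAt_pow 3 u).const_mul (20*r^3))).sub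
      ((hasDerivAt_pow 5 u).const_mul (6*r))).const_mul (48*m^2)
    refine (h.congr_deriv ?_).congr_of_eventuallyEq (Filter.Eventually.of_forall fun x => ?_)
    all_goals try funext x
    all_goals try simp only [id_eq, Pi.add_apply, Pi.neg_apply, Pi.sub_apply]
    all_goals push_cast
    all_goals ring
  have hdenu : HasDerivAt (fun u' : ℝ => (r^2 + u'^2)^6) (12*u*(r^2+u^2)^5) u := by
    have h := ((hasDerivAt_pow 2 u).const_add (r^2)).pow 6
    refine h.congr_deriv ?_
    push_cast; ring
  have hg := hnum.div hdenu (pow_ne_zero 6 h)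
  have hcos : HasDerivAt (fun θ' => a * Real.cos θ') (a * -Real.sin θ) θ :=
    (Real.hasDerivAt_cos θ).const_mul a
  have hcomp := hg.comp θ hcos
  rw [hf]; erw [hcomp.deriv]
  field_simp


set_option maxHeartbeats 4000000 in
/-- The first Abdelqader–Lake syzygy
`I₆ − I₅ + (12/5)(I₁I₃ − I₂I₄) = 0` holds for the Kerr–(anti-)de Sitter black hole. -/
theorem first_syzygy (a m Λ r θ : ℝ) (h : 0 < rho2 a r θ) :
    I6 a m Λ r θ - I5 a m Λ r θ +
      12 / 5 * (I1 a m r θ * I3 a m Λ r θ - I2 a m r θ * I4 a m Λ r θ) = 0 := by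
  have e : rho2 a r θ = r^2 + (a*Real.cos θ)^2 := by rw [rho2]; ring
  have hne : r^2 + (a*Real.cos θ)^2 ≠ 0 := by rw [← e]; exact ne_of_gt h
  have sq : ∀ X : ℝ, (-(a*Real.sin θ) * X)^2 = a^2*(1 - Real.cos θ^2) * X^2 := by
    intro X
    rw [← Real.sin_sq]
    ring
  rw [I5, I6, deriv_I1_r a m θ r hne, deriv_I2_r a m θ r hne, deriv_I1_θ a m r θ hne,
    deriv_I2_θ a m r θ hne, sq, sq, I1_eq, I2_eq, I3, I4, E, Δr, Δθ, e]
  field_simp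
  ring

end KerrAdS
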